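/- Let R be a standard graded Noetherian ring with R_0 = A and let X ∈ *Mod_f(R). Assume Ass_A X is a finite set and that the sets Ass_A H⁰_{R₊}(X)_n are eventually constant in n. Then the sets Ass_A X_n are eventually constant: there exists n₀ with Ass_A X_n = Ass_A X_{n₀} for all n ≥ n₀. -/

import Mathlib

/-- The `I`-torsion submodule `H⁰_I(X) = { x | I^k x = 0 for some k }`. -/
def H0 {R : Type} [CommRing R] (I : Ideal R) (X : Type) [AddCommGroup X] [Module R X] :
    Submodule R X :=
  ⨆ k : ℕ, Submodule.torsionBySet R X ((I ^ k : Ideal R) : Set R)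

section aux

variable {A : Type} [CommRing A] {R : Type} [CommRing R] [Algebra A R]
  {X : Type} [AddCommGroup X] [Module A X] [Module R X] [IsScalarTower A R X]

lemma smul_comm' (a : A) (r : R) (x : X) : a • (r • x) = r • (a • x) := by
  rw [← algebraMap_smul R a x, ← algebraMap_smul R a (r • x), smul_smul, smul_smul, mul_comm]

lemma asmul_mem_H0 {I : Ideal R} {z : X} (hz : z ∈ H0 I X) (a : A) : a • z ∈ H0 I X := by
  rw [← algebraMap_smul R a z]; exact Submodule.smul_mem _ _ hz

omit [Algebra A R] [Module A X] [IsScalarTower A R X] in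
lemma mem_H0_iff {I : Ideal R} {z : X} :
    z ∈ H0 I X ↔ ∃ k : ℕ, ∀ g ∈ I ^ k, g • z = 0 := by
  constructor
  · intro hz
    rw [H0, Submodule.mem_iSup_of_directed] at hz
    · obtain ⟨k, hk⟩ := hz
      exact ⟨k, fun g hg => (Submodule.mem_torsionBySet_iff _ _).mp hk ⟨g, hg⟩⟩
    · intro i j
      refine ⟨max i j, ?_, ?_⟩ <;>
        exact Submodule.torsionBySet_le_torsionBySet_of_subset
          (Ideal.pow_le_pow_right (by omega))
  · rintro ⟨k, hk⟩
    exact le_iSup (fun k => Submodule.torsionBySet R X ((I ^ k : Ideal R) : Set R)) k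
      ((Submodule.mem_torsionBySet_iff _ _).mpr fun ⟨g, hg⟩ => hk g hg)

omit [Algebra A R] [Module A X] [IsScalarTower A R X] in
lemma H0_saturated [IsNoetherianRing R] {I : Ideal R} {z : X}
    (h : ∀ g ∈ I, g • z ∈ H0 I X) : z ∈ H0 I X := by
  classical
  obtain ⟨s, hs⟩ := IsNoetherian.noetherian I
  have hgen : ∀ g : R, ∃ k : ℕ, g ∈ s → ∀ h ∈ I ^ k, h • (g • z) = 0 := by
    intro g
    by_cases hg : g ∈ s
    · have : g ∈ I := by rw [← hs]; exact Submodule.subset_span hg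
      obtain ⟨k, hk⟩ := mem_H0_iff.mp (h g this)
      exact ⟨k, fun _ => hk⟩
    · exact ⟨0, fun hg' => absurd hg' hg⟩
  choose k hk using hgen
  set K := s.sup k with hK
  rw [mem_H0_iff]
  refine ⟨K + 1, ?_⟩
  have key : I ^ (K + 1) ≤ Submodule.comap (LinearMap.toSpanSingleton R X z) ⊥ := by
    rw [pow_succ]
    rw [Ideal.mul_le]
    intro r hr g hg
    simp only [Submodule.mem_comap, LinearMap.toSpanSingleton_apply, Submodule.mem_bot]
    have : g ∈ Submodule.comap (LinearMap.toSpanSingleton R X z)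
        (Submodule.comap (LinearMap.lsmul R X r) ⊥) := by
      rw [← hs] at hg
      refine Submodule.span_le.mpr ?_ hg
      intro g' hg'
      simp only [SetLike.mem_coe, Submodule.mem_comap, LinearMap.toSpanSingleton_apply,
        LinearMap.lsmul_apply, Submodule.mem_bot]
      exact hk g' hg' r (Ideal.pow_le_pow_right (Finset.le_sup hg') hr)
    simp only [Submodule.mem_comap, LinearMap.toSpanSingleton_apply, LinearMap.lsmul_apply,
      Submodule.mem_bot] at this
    rw [mul_smul]; exact this
  intro g hg
  simpa using key hg

lemma key_mono [IsNoetherianRing R] {p : Ideal A} (hp : p.IsPrime) {S : Set R} {x : X}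
    (hC : ∀ a : A, a • x ∈ H0 (Ideal.span S) X ↔ a ∈ p) :
    ∃ r ∈ S, ∀ a : A, a • (r • x) ∈ H0 (Ideal.span S) X ↔ a ∈ p := by
  classical
  set I := Ideal.span S with hI
  set H := H0 I X with hHdef
  have hone : (1 : A) ∉ p := (Ideal.ne_top_iff_one p).mp hp.ne_top
  by_contra hcon
  push_neg at hcon
  have hbad : ∀ r ∈ S, ∃ a : A, a ∉ p ∧ a • (r • x) ∈ H := by
    intro r hr
    have himp : ∀ a ∈ p, a • (r • x) ∈ H := fun a ha => by
      rw [smul_comm']; exact Submodule.smul_mem _ _ ((hC a).mpr ha)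
    rcases hcon r hr with ⟨a, ⟨hmem, hnp⟩ | ⟨hnmem, hmemp⟩⟩
    · exact ⟨a, hnp, hmem⟩
    · exact absurd (himp a hmemp) hnmem
  let N : Submodule R X :=
    { carrier := {v | ∃ a : A, a ∉ p ∧ a • v ∈ H}
      zero_mem' := ⟨1, hone, by rw [smul_zero]; exact zero_mem _⟩
      add_mem' := by
        rintro v w ⟨a, ha, hav⟩ ⟨b, hb, hbw⟩
        refine ⟨a * b, fun h => (hp.mem_or_mem h).elim ha hb, ?_⟩
        rw [smul_add]
        exact add_mem (by rw [mul_comm, mul_smul]; exact asmul_mem_H0 hav b)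
          (by rw [mul_smul]; exact asmul_mem_H0 hbw a)
      smul_mem' := by
        rintro r v ⟨a, ha, hav⟩
        exact ⟨a, ha, by rw [smul_comm']; exact Submodule.smul_mem _ _ hav⟩ }
  have hSN : ∀ r ∈ S, r • x ∈ N := fun r hr => hbad r hr
  have hIN : ∀ g ∈ I, g • x ∈ N := by
    intro g hg
    have : g ∈ Submodule.comap (LinearMap.toSpanSingleton R X x) N :=
      Submodule.span_le.mpr (fun r hr => hSN r hr) hg
    simpa using this
  obtain ⟨s, hs⟩ := IsNoetherian.noetherian I
  have hgen : ∀ g : R, ∃ a : A, a ∉ p ∧ (g ∈ s → a • (g • x) ∈ H) := by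
    intro g
    by_cases hg : g ∈ s
    · obtain ⟨a, ha, hah⟩ := hIN g (by rw [← hs]; exact Submodule.subset_span hg)
      exact ⟨a, ha, fun _ => hah⟩
    · exact ⟨1, hone, fun hg' => absurd hg' hg⟩
  choose f hf1 hf2 using hgen
  set a : A := ∏ g ∈ s, f g with haa
  have hanp : a ∉ p := by
    intro h
    rw [Ideal.IsPrime.prod_mem_iff] at h
    obtain ⟨g, _, hg⟩ := h
    exact hf1 g hg
  have hIax : ∀ g ∈ I, g • (a • x) ∈ H := by
    intro g hg
    have : g ∈ Submodule.comap (LinearMap.toSpanSingleton R X (a • x)) H := by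
      rw [← hs] at hg
      refine Submodule.span_le.mpr ?_ hg
      intro g' hg'
      simp only [SetLike.mem_coe, Submodule.mem_comap, LinearMap.toSpanSingleton_apply]
      rw [← smul_comm' a g' x]
      have : a • (g' • x) = (∏ gg ∈ s.erase g', f gg) • (f g' • (g' • x)) := by
        rw [← mul_smul, mul_comm (∏ gg ∈ s.erase g', f gg) (f g'),
          Finset.mul_prod_erase s f hg', ← haa]
      rw [this]
      exact asmul_mem_H0 (hf2 g' hg') _
    simpa using this
  have : a • x ∈ H := H0_saturated hIax
  exact hanp ((hC a).mp this)

lemma level_exists [IsNoetherianRing A] {p : Ideal A} {I : Ideal R} {x : X}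
    (hmem : ∀ a ∈ p, a • x ∈ H0 I X) :
    ∃ t : ℕ, ∀ g ∈ I ^ t, ∀ a ∈ p, g • (a • x) = 0 := by
  classical
  obtain ⟨u, hu⟩ := IsNoetherian.noetherian p
  have hgen : ∀ b : A, ∃ k : ℕ, b ∈ u → ∀ g ∈ I ^ k, g • (b • x) = 0 := by
    intro b
    by_cases hb : b ∈ u
    · have : b ∈ p := by rw [← hu]; exact Submodule.subset_span hb
      obtain ⟨k, hk⟩ := mem_H0_iff.mp (hmem b this)
      exact ⟨k, fun _ => hk⟩
    · exact ⟨0, fun hb' => absurd hb' hb⟩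
  choose k hk using hgen
  refine ⟨u.sup k, fun g hg a ha => ?_⟩
  -- the set of `a` with `g • (a • x) = 0` is an `A`-submodule
  let W : Submodule A X :=
    { carrier := {v | g • v = 0}
      zero_mem' := by simp
      add_mem' := by intro v w hv hw; simp only [Set.mem_setOf_eq] at *
                     rw [smul_add, hv, hw, add_zero]
      smul_mem' := by intro c v hv; simp only [Set.mem_setOf_eq] at *
                      rw [← smul_comm', hv, smul_zero] }
  have : a ∈ Submodule.comap (LinearMap.toSpanSingleton A X x) W := by
    rw [← hu] at ha
    refine Submodule.span_le.mpr ?_ ha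
    intro b hb
    simp only [SetLike.mem_coe, Submodule.mem_comap, LinearMap.toSpanSingleton_apply]
    exact hk b hb g (Ideal.pow_le_pow_right (Finset.le_sup hb) hg)
  exact this

end aux

section graded

variable {A : Type} [CommRing A] {R : Type} [CommRing R] [Algebra A R]
  {X : Type} [AddCommGroup X] [Module A X] [Module R X] [IsScalarTower A R X]
  (𝒜 : ℕ → Submodule A R) (ℳ : ℤ → Submodule A X)

local notation "II" => Ideal.span ((𝒜 1 : Submodule A R) : Set R)

lemma chain [IsNoetherianRing R]
    (hsmul : ∀ (i : ℕ) (n : ℤ), ∀ r ∈ 𝒜 i, ∀ x ∈ ℳ n, r • x ∈ ℳ (n + i))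
    {p : Ideal A} (hp : p.IsPrime) {n : ℤ} {x : X} (hx : x ∈ ℳ n)
    (hC : ∀ a : A, a • x ∈ H0 II X ↔ a ∈ p) {t : ℕ}
    (hΦ : ∀ g ∈ II ^ t, ∀ a ∈ p, g • (a • x) = 0) :
    ∀ k : ℕ, ∃ y, y ∈ ℳ (n + (k : ℤ)) ∧ (∀ a : A, a • y ∈ H0 II X ↔ a ∈ p) ∧
      ∀ g ∈ II ^ (t - k), ∀ a ∈ p, g • (a • y) = 0 := by
  intro k
  induction k with
  | zero =>
    refine ⟨x, ?_, hC, ?_⟩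
    · simpa using hx
    · simpa using hΦ
  | succ k ih =>
    obtain ⟨y, hy, hCy, hΦy⟩ := ih
    obtain ⟨r, hr, hCr⟩ := key_mono hp hCy
    refine ⟨r • y, ?_, hCr, ?_⟩
    · have := hsmul 1 (n + (k : ℤ)) r hr y hy
      have harith : (n + (k : ℤ)) + ((1 : ℕ) : ℤ) = n + ((k + 1 : ℕ) : ℤ) := by push_cast; ring
      rwa [harith] at this
    · intro g hg a ha
      rw [smul_comm' a r y, ← mul_smul]
      rcases Nat.eq_zero_or_pos (t - k) with h0 | hpos
      · have h0' : t - (k + 1) = 0 := by omega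
        have hy0 : a • y = 0 := by
          have := hΦy 1 (by rw [h0, pow_zero, Ideal.one_eq_top]; trivial) a ha
          rwa [one_smul] at this
        rw [mul_smul, hy0, smul_zero, smul_zero]
      · have hj : t - k = (t - (k + 1)) + 1 := by omega
        have hgr : g * r ∈ II ^ (t - k) := by
          rw [hj, pow_succ]
          exact Ideal.mul_mem_mul hg (Ideal.subset_span hr)
        exact hΦy (g * r) hgr a ha

lemma ann_eq_of {M : Submodule A X} {y : X} (hy : y ∈ M) {p : Ideal A}
    (h : ∀ a : A, a ∈ p ↔ a • y = 0) : p = (A ∙ (⟨y, hy⟩ : M)).annihilator := by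
  ext a
  rw [Submodule.mem_annihilator_span_singleton, h a, Subtype.ext_iff]
  simp

lemma colon_bot_eq_ann {N : Type} [AddCommGroup N] [Module A N] (y : N) :
    (⊥ : Submodule A N).colon {y} = (A ∙ y).annihilator := by
  ext a
  rw [Submodule.mem_colon_singleton, Submodule.mem_bot, Submodule.mem_annihilator_span_singleton]

lemma ann_rad {N : Type} [AddCommGroup N] [Module A N] {y : N} {p : Ideal A} (hp : p.IsPrime)
    (h : p = (A ∙ y).annihilator) : p = ((⊥ : Submodule A N).colon {y}).radical := by
  rw [colon_bot_eq_ann, ← h, hp.radical]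

lemma eventually_ass [IsNoetherianRing A] [IsNoetherianRing R]
    (hsmul : ∀ (i : ℕ) (n : ℤ), ∀ r ∈ 𝒜 i, ∀ x ∈ ℳ n, r • x ∈ ℳ (n + i))
    {p : Ideal A} (hp : p.IsPrime) {n : ℤ} {x : X} (hx : x ∈ ℳ n)
    (hC : ∀ a : A, a • x ∈ H0 II X ↔ a ∈ p) :
    ∃ N : ℤ, ∀ n' ≥ N, p ∈ associatedPrimes A (ℳ n') := by
  obtain ⟨t, ht⟩ := level_exists (I := II) (x := x) (fun a ha => (hC a).mpr ha)
  refine ⟨n + t, fun n' hn' => ?_⟩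
  set k : ℕ := (n' - n).toNat with hkdef
  have hk1 : (k : ℤ) = n' - n := Int.toNat_of_nonneg (by omega)
  have hk2 : t ≤ k := by omega
  obtain ⟨y, hy, hCy, hΦy⟩ := chain 𝒜 ℳ hsmul hp hx hC ht k
  have hyn' : y ∈ ℳ n' := by rwa [show n + (k : ℤ) = n' by omega] at hy
  have hann : ∀ a : A, a ∈ p ↔ a • y = 0 := by
    intro a
    constructor
    · intro ha
      have := hΦy 1 (by rw [Nat.sub_eq_zero_of_le hk2, pow_zero, Ideal.one_eq_top]; trivial) a ha
      rwa [one_smul] at this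
    · intro ha
      exact (hCy a).mp (by rw [ha]; exact zero_mem _)
  exact ⟨hp, ⟨y, hyn'⟩, ann_rad hp (ann_eq_of hyn' hann)⟩

lemma split [IsNoetherianRing A] (n : ℤ) {p : Ideal A} (hass : p ∈ associatedPrimes A (ℳ n)) :
    p ∈ associatedPrimes A ↥((H0 II X).restrictScalars A ⊓ ℳ n) ∨
      (p.IsPrime ∧ ∃ x ∈ ℳ n, ∀ a : A, a • x ∈ H0 II X ↔ a ∈ p) := by
  obtain ⟨hp, y, hy⟩ := isAssociatedPrime_iff.mp hass
  have hann : ∀ a : A, a ∈ p ↔ a • (y : X) = 0 := by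
    intro a
    rw [hy, Submodule.mem_colon_singleton, Submodule.mem_bot, Subtype.ext_iff]
    simp
  by_cases hcase : ∀ a : A, a • (y : X) ∈ H0 II X → a ∈ p
  · right
    exact ⟨hp, y, y.2, fun a => ⟨hcase a, fun ha => by
      rw [(hann a).mp ha]; exact zero_mem _⟩⟩
  · left
    push_neg at hcase
    obtain ⟨b, hbH, hbp⟩ := hcase
    have hzmem : b • (y : X) ∈ (H0 II X).restrictScalars A ⊓ ℳ n :=
      ⟨hbH, Submodule.smul_mem _ _ y.2⟩
    refine ⟨hp, ⟨b • (y : X), hzmem⟩, ann_rad hp (ann_eq_of hzmem ?_)⟩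
    intro a
    constructor
    · intro ha
      rw [smul_comm, (hann a).mp ha, smul_zero]
    · intro ha
      rw [smul_smul] at ha
      have : a * b ∈ p := (hann (a * b)).mpr ha
      exact (hp.mem_or_mem this).resolve_right hbp

end graded

/-- Let `R` be a standard graded Noetherian ring with `R_0 = A` and `X ∈ *Mod_f(R)`.
Assume `Ass_A X` is finite and the sets `Ass_A H⁰_{R₊}(X)_n` are eventually constant.
Then the sets `Ass_A X_n` are eventually constant. -/
theorem stmt4 (A : Type) [CommRing A] [IsNoetherianRing A]
    (R : Type) [CommRing R] [Algebra A R] [IsNoetherianRing R]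
    (𝒜 : ℕ → Submodule A R) [GradedAlgebra 𝒜] (hstd : ∀ n, 𝒜 n = 𝒜 1 ^ n)
    (X : Type) [AddCommGroup X] [Module A X] [Module R X] [IsScalarTower A R X]
    (ℳ : ℤ → Submodule A X) [DirectSum.Decomposition ℳ]
    (hsmul : ∀ (i : ℕ) (n : ℤ), ∀ r ∈ 𝒜 i, ∀ x ∈ ℳ n, r • x ∈ ℳ (n + i))
    (hfg : ∀ n, (ℳ n).FG) (hvan : ∃ n₀ : ℤ, ∀ n < n₀, ℳ n = ⊥)
    (hAssFin : (associatedPrimes A X).Finite)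
    (hH0stable : ∃ m : ℤ, ∀ n ≥ m,
      associatedPrimes A ↥((H0 (Ideal.span (𝒜 1 : Set R)) X).restrictScalars A ⊓ ℳ n) =
      associatedPrimes A ↥((H0 (Ideal.span (𝒜 1 : Set R)) X).restrictScalars A ⊓ ℳ m)) :
    ∃ n₀ : ℤ, ∀ n ≥ n₀, associatedPrimes A (ℳ n) = associatedPrimes A (ℳ n₀) := by
  classical
  obtain ⟨m, hm⟩ := hH0stable
  set S := associatedPrimes A
    ↥((H0 (Ideal.span (𝒜 1 : Set R)) X).restrictScalars A ⊓ ℳ m) with hS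
  set T : Set (Ideal A) := {p | ∃ n ≥ m, p.IsPrime ∧ ∃ x ∈ ℳ n,
    ∀ a : A, a • x ∈ H0 (Ideal.span (𝒜 1 : Set R)) X ↔ a ∈ p} with hT
  have hTass : ∀ p ∈ T, ∃ N : ℤ, ∀ n' ≥ N, p ∈ associatedPrimes A (ℳ n') := by
    rintro p ⟨n, hn, hp, x, hx, hC⟩
    exact eventually_ass 𝒜 ℳ hsmul hp hx hC
  have hTsub : T ⊆ associatedPrimes A X := by
    intro p hpT
    obtain ⟨N, hN⟩ := hTass p hpT
    exact associatedPrimes.subset_of_injective (f := (ℳ N).subtype)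
      (Submodule.injective_subtype _) (hN N le_rfl)
  have hTfin : T.Finite := hAssFin.subset hTsub
  choose! Nf hNf using hTass
  obtain ⟨N₀, hN₀⟩ := (hTfin.image Nf).bddAbove
  refine ⟨max m N₀, ?_⟩
  have hmain : ∀ n ≥ max m N₀, associatedPrimes A (ℳ n) = S ∪ T := by
    intro n hn
    have hnm : m ≤ n := le_trans (le_max_left _ _) hn
    apply Set.Subset.antisymm
    · intro p hass
      rcases split 𝒜 ℳ n hass with h | h
      · left; rw [← hm n hnm]; exact h
      · right; exact ⟨n, hnm, h⟩
    · rintro p (hp | hp)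
      · have : p ∈ associatedPrimes A
            ↥((H0 (Ideal.span (𝒜 1 : Set R)) X).restrictScalars A ⊓ ℳ n) := by
          rw [hm n hnm]; exact hp
        exact associatedPrimes.subset_of_injective (f := Submodule.inclusion inf_le_right)
          (Submodule.inclusion_injective _) this
      · refine hNf p hp n (le_trans ?_ hn)
        exact le_trans (hN₀ (Set.mem_image_of_mem Nf hp)) (le_max_right m N₀)
  intro n hn
  rw [hmain n hn, hmain (max m N₀) le_rfl]
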